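/- If p' = -(ρ+p)ζ'/ζ with ρ nonincreasing on (0,R], p nonincreasing with p(R)=0, ζ(0)=ζ_c > 0, then for all r: ζ_c·(ρ_c+p_c)/(ρ_c+p(r)) ≤ ζ(r) ≤ ζ_c·(ρ(r)+p_c)/(ρ(r)+p(r)); in particular √(1-2M/R) ≥ ζ_c(ρ_c+p_c)/ρ_c and √(1-2M/R) ≤ ζ_c(ρ_s+p_c)/ρ_s. -/

import Mathlib

open Real Set
open Topology

/-- Two-sided bound on the lapse in terms of the density and pressure profiles:
`ζ_c (ρ_c+p_c)/(ρ_c+p(r)) ≤ ζ(r) ≤ ζ_c (ρ(r)+p_c)/(ρ(r)+p(r))`, and at the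
surface `√(1-2M/R) ≥ ζ_c(ρ_c+p_c)/ρ_c` and `√(1-2M/R) ≤ ζ_c(ρ_s+p_c)/ρ_s`. -/
theorem lapse_two_sided_bound
    (R M : ℝ) (hR : 0 < R) (ρ p ζ : ℝ → ℝ)
    (hρanti : AntitoneOn ρ (Icc 0 R))
    (hpanti : AntitoneOn p (Icc 0 R))
    (hρpos : ∀ r ∈ Icc (0:ℝ) R, 0 < ρ r)
    (hppos : ∀ r ∈ Icc (0:ℝ) R, 0 ≤ p r)
    (hpR : p R = 0)
    (hζc : 0 < ζ 0)
    (hζpos : ∀ r ∈ Icc (0:ℝ) R, 0 < ζ r)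
    (hζR : ζ R = Real.sqrt (1 - 2 * M / R))
    (hcont : ContinuousOn ζ (Icc 0 R) ∧ ContinuousOn p (Icc 0 R) ∧
      ContinuousOn ρ (Icc 0 R))
    (hdiff : ∀ r ∈ Ioo (0:ℝ) R, DifferentiableAt ℝ ζ r ∧ DifferentiableAt ℝ p r)
    (hcons : ∀ r ∈ Ioo (0:ℝ) R,
      deriv p r = -((ρ r + p r) * deriv ζ r / ζ r)) :
    (∀ r ∈ Icc (0:ℝ) R,
      ζ 0 * (ρ 0 + p 0) / (ρ 0 + p r) ≤ ζ r ∧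
        ζ r ≤ ζ 0 * (ρ r + p 0) / (ρ r + p r)) ∧
    Real.sqrt (1 - 2 * M / R) ≥ ζ 0 * (ρ 0 + p 0) / ρ 0 ∧
    Real.sqrt (1 - 2 * M / R) ≤ ζ 0 * (ρ R + p 0) / ρ R := by
  obtain ⟨hζcont, hpcont, hρcont⟩ := hcont
  have h0R : (0:ℝ) ∈ Icc (0:ℝ) R := ⟨le_refl 0, hR.le⟩
  have hRR : R ∈ Icc (0:ℝ) R := ⟨hR.le, le_refl R⟩
  -- p' ≤ 0 on the interior
  have hp' : ∀ x ∈ Ioo (0:ℝ) R, deriv p x ≤ 0 := by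
    intro x hx
    have hd := (hdiff x hx).2.hasDerivAt
    have ht : Filter.Tendsto (slope p x) (𝓝[>] x) (𝓝 (deriv p x)) :=
      (hasDerivAt_iff_tendsto_slope.1 hd).mono_left
        (nhdsWithin_mono x (fun y hy => (ne_of_lt hy).symm))
    refine le_of_tendsto ht ?_
    filter_upwards [Ioo_mem_nhdsGT_of_mem ⟨le_refl x, hx.2⟩] with y hy
    have hxI : x ∈ Icc (0:ℝ) R := ⟨hx.1.le, hx.2.le⟩
    have hyI : y ∈ Icc (0:ℝ) R := ⟨hx.1.le.trans hy.1.le, hy.2.le⟩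
    have hpy : p y ≤ p x := hpanti hxI hyI hy.1.le
    rw [slope_def_field]
    exact div_nonpos_of_nonpos_of_nonneg (by linarith) (by linarith [hy.1])
  -- ζ' ≥ 0 on the interior
  have hζ' : ∀ x ∈ Ioo (0:ℝ) R, 0 ≤ deriv ζ x := by
    intro x hx
    have hxI : x ∈ Icc (0:ℝ) R := ⟨hx.1.le, hx.2.le⟩
    have h1 := hcons x hx
    have h2 := hp' x hx
    have hρp : 0 < ρ x + p x := by
      have := hρpos x hxI; have := hppos x hxI; linarith
    have hζx := hζpos x hxI
    have hζne : ζ x ≠ 0 := ne_of_gt hζx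
    have key : (ρ x + p x) * deriv ζ x = -(deriv p x) * ζ x := by
      field_simp at h1
      linarith
    have hnn : 0 ≤ -(deriv p x) * ζ x :=
      mul_nonneg (by linarith) hζx.le
    nlinarith
  -- derivative of s ↦ ζ s * (c + p s) equals deriv ζ s * (c - ρ s)
  have hDeriv : ∀ c : ℝ, ∀ x ∈ Ioo (0:ℝ) R,
      deriv (fun s => ζ s * (c + p s)) x = deriv ζ x * (c - ρ x) := by
    intro c x hx
    have hxI : x ∈ Icc (0:ℝ) R := ⟨hx.1.le, hx.2.le⟩
    have hζne : ζ x ≠ 0 := ne_of_gt (hζpos x hxI)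
    have hd : HasDerivAt (fun s => ζ s * (c + p s))
        (deriv ζ x * (c + p x) + ζ x * (0 + deriv p x)) x :=
      (hdiff x hx).1.hasDerivAt.mul ((hasDerivAt_const x c).add (hdiff x hx).2.hasDerivAt)
    rw [hd.deriv, hcons x hx]
    field_simp
    ring
  -- lower bound: s ↦ ζ s * (ρ 0 + p s) is monotone
  have hGmono : MonotoneOn (fun s => ζ s * (ρ 0 + p s)) (Icc 0 R) := by
    apply monotoneOn_of_deriv_nonneg (convex_Icc 0 R)
      (hζcont.mul (continuousOn_const.add hpcont))
    · rw [interior_Icc]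
      intro x hx
      exact ((hdiff x hx).1.mul ((differentiableAt_const _).add (hdiff x hx).2)).differentiableWithinAt
    · rw [interior_Icc]
      intro x hx
      show 0 ≤ deriv (fun s => ζ s * (ρ 0 + p s)) x
      rw [hDeriv (ρ 0) x hx]
      have hxI : x ∈ Icc (0:ℝ) R := ⟨hx.1.le, hx.2.le⟩
      have hρle : ρ x ≤ ρ 0 := hρanti h0R hxI hx.1.le
      exact mul_nonneg (hζ' x hx) (by linarith)
  -- upper bound: for each r, s ↦ ζ s * (ρ r + p s) is antitone on [0, r]
  have hH : ∀ r ∈ Icc (0:ℝ) R, ζ r * (ρ r + p r) ≤ ζ 0 * (ρ r + p 0) := by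
    intro r hr
    have hsub : Icc (0:ℝ) r ⊆ Icc (0:ℝ) R := Icc_subset_Icc (le_refl 0) hr.2
    have hsub' : Ioo (0:ℝ) r ⊆ Ioo (0:ℝ) R := Ioo_subset_Ioo (le_refl 0) hr.2
    have hanti : AntitoneOn (fun s => ζ s * (ρ r + p s)) (Icc 0 r) := by
      apply antitoneOn_of_deriv_nonpos (convex_Icc 0 r)
        ((hζcont.mono hsub).mul (continuousOn_const.add (hpcont.mono hsub)))
      · rw [interior_Icc]
        intro x hx
        exact ((hdiff x (hsub' hx)).1.mul
          ((differentiableAt_const _).add (hdiff x (hsub' hx)).2)).differentiableWithinAt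
      · rw [interior_Icc]
        intro x hx
        show deriv (fun s => ζ s * (ρ r + p s)) x ≤ 0
        rw [hDeriv (ρ r) x (hsub' hx)]
        have hxI : x ∈ Icc (0:ℝ) R := ⟨hx.1.le, (hx.2.le.trans hr.2)⟩
        have hρge : ρ r ≤ ρ x := hρanti hxI hr hx.2.le
        exact mul_nonpos_of_nonneg_of_nonpos (hζ' x (hsub' hx)) (by linarith)
    exact hanti (by exact ⟨le_refl 0, hr.1⟩) ⟨hr.1, le_refl r⟩ hr.1
  have main : ∀ r ∈ Icc (0:ℝ) R,
      ζ 0 * (ρ 0 + p 0) / (ρ 0 + p r) ≤ ζ r ∧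
        ζ r ≤ ζ 0 * (ρ r + p 0) / (ρ r + p r) := by
    intro r hr
    have hρ0 := hρpos 0 h0R
    have hρr := hρpos r hr
    have hpr := hppos r hr
    have hp0 := hppos 0 h0R
    constructor
    · rw [div_le_iff₀ (by linarith)]
      have := hGmono h0R hr hr.1
      simpa using this
    · rw [le_div_iff₀ (by linarith)]
      exact hH r hr
  refine ⟨main, ?_, ?_⟩
  · have := (main R hRR).1
    rw [hpR, add_zero] at this
    rw [ge_iff_le, ← hζR]
    exact this
  · have := (main R hRR).2
    rw [hpR, add_zero] at this
    rw [← hζR]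
    exact this
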